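/- Let i ≥ 3, j ≥ 1 and 0 ≤ k ≤ i−1 be integers. Then every simple graph on the vertex set (Fin j) × (ZMod i) whose edge set contains all edges of the twisted toroidal grid T(i,j,k) has a Hamiltonian cycle. -/

import Mathlib

/-- The twisted toroidal grid `T(i,j,k)` on vertex set `Fin j × ZMod i`, with row edges
`{(b,a),(b,a+1)}`, vertical edges `{(b,a),(b+1,a)}` for `0 ≤ b < j-1`, and wrap-around
edges `{(j-1,a),(0,a+k)}`. -/
def twistedGrid (i j k : ℕ) : SimpleGraph (Fin j × ZMod i) :=
  SimpleGraph.fromRel (fun p q =>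
    (p.1 = q.1 ∧ q.2 = p.2 + 1) ∨
    ((q.1 : ℕ) = (p.1 : ℕ) + 1 ∧ q.2 = p.2) ∨
    ((p.1 : ℕ) = j - 1 ∧ (q.1 : ℕ) = 0 ∧ q.2 = p.2 + (k : ZMod i)))

set_option linter.unusedSectionVars false
set_option linter.unusedVariables false


open SimpleGraph

variable {V : Type*} [DecidableEq V]

lemma walk_of_chain {G : SimpleGraph V} :
    ∀ (a : V) (l : List V), List.Chain G.Adj a l →
      ∃ w : G.Walk a ((a :: l).getLast (List.cons_ne_nil a l)), w.support = a :: l := by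
  intro a l
  induction l generalizing a with
  | nil => intro _; exact ⟨Walk.nil, rfl⟩
  | cons b l ih =>
    intro h
    simp only [List.Chain, List.isChain_cons_cons] at h
    obtain ⟨w, hw⟩ := ih b h.2
    refine ⟨(Walk.cons h.1 w).copy rfl (List.getLast_cons (List.cons_ne_nil b l)).symm, ?_⟩
    rw [Walk.support_copy, Walk.support_cons, hw]

lemma edge_back_not_mem {G : SimpleGraph V} {a b : V} (w : G.Walk a b)
    (hnd : w.support.Nodup) (hlen : 2 ≤ w.length) : s(b, a) ∉ w.edges := by
  cases w with
  | nil => simp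
  | @cons _ c _ h w' =>
    intro hmem
    rw [Walk.edges_cons, List.mem_cons] at hmem
    rw [Walk.support_cons, List.nodup_cons] at hnd
    rcases hmem with hmem | hmem
    · rw [Sym2.eq_iff] at hmem
      rcases hmem with ⟨h1, h2⟩ | ⟨h1, h2⟩
      · subst h1; subst h2; exact G.irrefl h
      · subst h1
        -- w' : G.Walk b b, with nodup support
        have hp : w'.IsPath := Walk.IsPath.mk' hnd.2
        rw [Walk.isPath_iff_eq_nil] at hp
        subst hp
        simp [Walk.length_cons] at hlen
    · exact hnd.1 (w'.snd_mem_support_of_mem_edges hmem)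

lemma ham_of_list {G : SimpleGraph V} [Fintype V] (a : V) (l : List V)
    (hchain : List.Chain G.Adj a l)
    (hclose : G.Adj ((a :: l).getLast (List.cons_ne_nil a l)) a)
    (hnd : (a :: l).Nodup) (hcov : ∀ v : V, v ∈ a :: l) (hlen : 3 ≤ (a :: l).length) :
    ∃ (v : V) (c : G.Walk v v), c.IsHamiltonianCycle := by
  obtain ⟨w, hw⟩ := walk_of_chain a l hchain
  have hwnd : w.support.Nodup := by rw [hw]; exact hnd
  have hpath : w.IsPath := Walk.IsPath.mk' hwnd
  have hwlen : 2 ≤ w.length := by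
    have := w.length_support
    rw [hw] at this
    omega
  have hnotmem := edge_back_not_mem w hwnd hwlen
  refine ⟨_, Walk.cons hclose w, ?_⟩
  rw [Walk.isHamiltonianCycle_iff_isCycle_and_support_count_tail_eq_one]
  constructor
  · exact (Walk.cons_isCycle_iff w hclose).2 ⟨hpath, hnotmem⟩
  · intro v
    rw [Walk.support_cons, List.tail_cons, hw]
    exact List.count_eq_one_of_mem hnd (hcov v)

lemma chain_of_chain' {R : V → V → Prop} {a : V} {l : List V} (h : List.Chain' R (a :: l)) :
    List.Chain R a l := h

lemma ham_of_fn {G : SimpleGraph V} [Fintype V] (N : ℕ) (hN : 3 ≤ N)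
    (hcard : Fintype.card V = N) (f : ℕ → V)
    (hinj : ∀ m, m < N → ∀ n, n < N → f m = f n → m = n)
    (hadj : ∀ n, n + 1 < N → G.Adj (f n) (f (n + 1)))
    (hclose : G.Adj (f (N - 1)) (f 0)) :
    ∃ (v : V) (c : G.Walk v v), c.IsHamiltonianCycle := by
  obtain ⟨n, rfl⟩ : ∃ n, N = n + 1 := ⟨N - 1, by omega⟩
  have hl : (List.range (n + 1)).map f = f 0 :: (List.range n).map (fun m => f (m + 1)) := by
    rw [List.range_succ_eq_map, List.map_cons, List.map_map]
    rfl
  have hchain' : List.Chain' G.Adj ((List.range (n + 1)).map f) := by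
    show List.IsChain G.Adj _
    rw [List.isChain_map]
    exact (List.isChain_range_succ _ n).2 (fun m hm => hadj m (by omega))
  rw [hl] at hchain'
  have hchain := chain_of_chain' hchain'
  have hnd : (f 0 :: (List.range n).map (fun m => f (m + 1))).Nodup := by
    rw [← hl]
    refine List.Nodup.map_on ?_ List.nodup_range
    intro x hx y hy hxy
    exact hinj x (List.mem_range.1 hx) y (List.mem_range.1 hy) hxy
  have hlen : (f 0 :: (List.range n).map (fun m => f (m + 1))).length = n + 1 := by
    simp
  have hcov : ∀ v : V, v ∈ f 0 :: (List.range n).map (fun m => f (m + 1)) := by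
    intro v
    have h1 : (f 0 :: (List.range n).map (fun m => f (m + 1))).toFinset = Finset.univ := by
      apply Finset.eq_univ_of_card
      rw [List.toFinset_card_of_nodup hnd, hlen, hcard]
    rw [← List.mem_toFinset, h1]
    exact Finset.mem_univ v
  have hlast0 : ∀ (L : List V) (h : L ≠ []), L = (List.range (n + 1)).map f →
      L.getLast h = f n := by
    intro L h hL
    subst hL
    rw [List.getLast_eq_getElem]
    simp
  have hlast := hlast0 _ (List.cons_ne_nil _ _) hl.symm
  refine ham_of_list (f 0) _ hchain ?_ hnd hcov (by omega)
  rw [hlast]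
  simpa using hclose



section Grid

variable {i j k : ℕ} {G : SimpleGraph (Fin j × ZMod i)}

lemma adj_row (hi : 3 ≤ i) (hG : twistedGrid i j k ≤ G) (b : Fin j) (a : ZMod i) :
    G.Adj (b, a) (b, a + 1) := by
  apply hG
  rw [twistedGrid, SimpleGraph.fromRel_adj]
  refine ⟨?_, Or.inl (Or.inl ⟨rfl, rfl⟩)⟩
  intro hc
  have ha : a = a + 1 := congrArg Prod.snd hc
  have h1 : (1 : ZMod i) = 0 := (left_eq_add.1 ha)
  haveI : Fact (1 < i) := ⟨by omega⟩
  exact one_ne_zero h1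

lemma adj_vert (hG : twistedGrid i j k ≤ G) {b b' : Fin j} (h : (b' : ℕ) = (b : ℕ) + 1)
    (a : ZMod i) : G.Adj (b, a) (b', a) := by
  apply hG
  rw [twistedGrid, SimpleGraph.fromRel_adj]
  refine ⟨?_, Or.inl (Or.inr (Or.inl ⟨h, rfl⟩))⟩
  intro hc
  have hb : b = b' := congrArg Prod.fst hc
  rw [hb] at h
  omega

def vtx (i j : ℕ) (hj : 0 < j) (r c : ℕ) : Fin j × ZMod i :=
  (⟨r % j, Nat.mod_lt r hj⟩, (c : ZMod i))

lemma vtx_inj (hi : 3 ≤ i) (hj : 0 < j) {r c r' c' : ℕ} (hr : r < j) (hr' : r' < j)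
    (hc : c < i) (hc' : c' < i) (h : vtx i j hj r c = vtx i j hj r' c') : r = r' ∧ c = c' := by
  haveI : NeZero i := ⟨by omega⟩
  have h1 : r % j = r' % j := congrArg (fun p : Fin j × ZMod i => p.1.1) h
  have h2 : (c : ZMod i) = (c' : ZMod i) := congrArg Prod.snd h
  constructor
  · rwa [Nat.mod_eq_of_lt hr, Nat.mod_eq_of_lt hr'] at h1
  · have := congrArg ZMod.val h2
    rwa [ZMod.val_cast_of_lt hc, ZMod.val_cast_of_lt hc'] at this

lemma adj_row' (hi : 3 ≤ i) (hj : 0 < j) (hG : twistedGrid i j k ≤ G) (r c : ℕ) :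
    G.Adj (vtx i j hj r c) (vtx i j hj r (c + 1)) := by
  have h := adj_row hi hG ⟨r % j, Nat.mod_lt r hj⟩ (c : ZMod i)
  have h2 : vtx i j hj r (c + 1) = (⟨r % j, Nat.mod_lt r hj⟩, (c : ZMod i) + 1) := by
    unfold vtx
    rw [Prod.mk.injEq]
    exact ⟨rfl, by push_cast; ring⟩
  rw [h2]
  exact h

lemma vtx_wrap (hi : 3 ≤ i) (hj : 0 < j) (r : ℕ) :
    vtx i j hj r ((i - 1) + 1) = vtx i j hj r 0 := by
  unfold vtx
  rw [Prod.mk.injEq]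
  refine ⟨rfl, ?_⟩
  have : (i - 1) + 1 = i := by omega
  rw [this]
  simp [ZMod.natCast_self]

lemma adj_vert' (hi : 3 ≤ i) (hj : 0 < j) (hG : twistedGrid i j k ≤ G) (r c : ℕ)
    (h : r + 1 < j) : G.Adj (vtx i j hj r c) (vtx i j hj (r + 1) c) := by
  refine adj_vert hG ?_ (c : ZMod i)
  show (r + 1) % j = r % j + 1
  rw [Nat.mod_eq_of_lt h, Nat.mod_eq_of_lt (by omega)]

end Grid

-- nat div/mod helper
lemma div_mod_pair {j : ℕ} (hj : 0 < j) (q r : ℕ) (hr : r < j) :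
    (j * q + r) / j = q ∧ (j * q + r) % j = r := by
  constructor
  · rw [Nat.mul_add_div hj, Nat.div_eq_of_lt hr, add_zero]
  · rw [Nat.mul_add_mod, Nat.mod_eq_of_lt hr]

def snakeF (h d n : ℕ) : ℕ × ℕ :=
  (if (n / h + d) % 2 = 0 then n % h else h - 1 - n % h, n / h)

lemma snake_eval {h : ℕ} (hh : 0 < h) (d q r : ℕ) (hr : r < h) :
    snakeF h d (h * q + r) = (if (q + d) % 2 = 0 then r else h - 1 - r, q) := by
  obtain ⟨h1, h2⟩ := div_mod_pair hh q r hr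
  simp only [snakeF, h1, h2]

lemma snake_fst_lt {h : ℕ} (hh : 0 < h) (d n : ℕ) : (snakeF h d n).1 < h := by
  have := Nat.mod_lt n hh
  unfold snakeF
  dsimp only
  split <;> omega

lemma snake_inj {h : ℕ} (hh : 0 < h) (d : ℕ) {m n : ℕ}
    (hmn : snakeF h d m = snakeF h d n) : m = n := by
  unfold snakeF at hmn
  have h2 : m / h = n / h := congrArg Prod.snd hmn
  have h1 := congrArg Prod.fst hmn
  dsimp only at h1
  rw [h2] at h1
  have hm : m % h < h := Nat.mod_lt m hh
  have hn : n % h < h := Nat.mod_lt n hh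
  have hmod : m % h = n % h := by
    split at h1 <;> omega
  rw [← Nat.div_add_mod m h, ← Nat.div_add_mod n h, h2, hmod]

lemma snake_step {h : ℕ} (hh : 0 < h) (d n : ℕ) :
    ((snakeF h d (n + 1)).2 = (snakeF h d n).2 ∧
      ((snakeF h d (n + 1)).1 = (snakeF h d n).1 + 1 ∨
        (snakeF h d n).1 = (snakeF h d (n + 1)).1 + 1)) ∨
    ((snakeF h d (n + 1)).2 = (snakeF h d n).2 + 1 ∧
      (snakeF h d (n + 1)).1 = (snakeF h d n).1) := by
  have hr : n % h < h := Nat.mod_lt n hh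
  have hn : h * (n / h) + n % h = n := Nat.div_add_mod n h
  by_cases hcase : n % h + 1 < h
  · have he : n + 1 = h * (n / h) + (n % h + 1) := by omega
    have h1 := snake_eval hh d (n / h) (n % h + 1) hcase
    have h0 := snake_eval hh d (n / h) (n % h) hr
    rw [hn] at h0
    rw [he, h1, h0]
    left
    dsimp only
    refine ⟨rfl, ?_⟩
    split <;> omega
  · have he : n + 1 = h * (n / h + 1) + 0 := by rw [Nat.mul_add, Nat.mul_one]; omega
    have h1 := snake_eval hh d (n / h + 1) 0 hh
    rw [← he] at h1
    have h0 := snake_eval hh d (n / h) (n % h) hr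
    rw [hn] at h0
    rw [h1, h0]
    right
    dsimp only
    refine ⟨rfl, ?_⟩
    have hpar : (n / h + 1 + d) % 2 = 1 - (n / h + d) % 2 := by omega
    split <;> split <;> omega

def GStep (p q : ℕ × ℕ) : Prop :=
  (q.2 = p.2 ∧ (q.1 = p.1 + 1 ∨ p.1 = q.1 + 1)) ∨ (q.2 = p.2 + 1 ∧ q.1 = p.1)

lemma snake_gstep {h : ℕ} (hh : 0 < h) (d n : ℕ) :
    GStep (snakeF h d n) (snakeF h d (n + 1)) := snake_step hh d n

section Emb

variable {i j k : ℕ} {G : SimpleGraph (Fin j × ZMod i)}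

lemma step_adj_col (hi : 3 ≤ i) (hj : 0 < j) (hG : twistedGrid i j k ≤ G) {h : ℕ}
    (hh : h ≤ j) {p q : ℕ × ℕ} (hp : p.1 < h) (hq : q.1 < h) (hstep : GStep p q) :
    G.Adj (vtx i j hj p.1 p.2) (vtx i j hj q.1 q.2) := by
  rcases hstep with ⟨hc, hr | hr⟩ | ⟨hc, hr⟩
  · rw [hc, hr]
    exact adj_vert' hi hj hG p.1 p.2 (by omega)
  · rw [hc, hr]
    exact (adj_vert' hi hj hG q.1 p.2 (by omega)).symm
  · rw [hc, hr]
    exact adj_row' hi hj hG p.1 p.2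

lemma step_adj_swap (hi : 3 ≤ i) (hj : 0 < j) (hG : twistedGrid i j k ≤ G)
    {p q : ℕ × ℕ} (hp : p.2 < j) (hq : q.2 < j) (hstep : GStep p q) :
    G.Adj (vtx i j hj p.2 p.1) (vtx i j hj q.2 q.1) := by
  rcases hstep with ⟨hc, hr | hr⟩ | ⟨hc, hr⟩
  · rw [hc, hr]
    exact adj_row' hi hj hG p.2 p.1
  · rw [hc, hr]
    exact (adj_row' hi hj hG p.2 q.1).symm
  · rw [hc, hr]
    exact adj_vert' hi hj hG p.2 p.1 (by omega)

lemma gstep_shift (c0 : ℕ) {p q : ℕ × ℕ} (h : GStep p q) :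
    GStep (p.1, c0 + p.2) (q.1, c0 + q.2) := by
  unfold GStep at *
  dsimp only
  omega

end Emb

section Cases

variable {i j k : ℕ} {G : SimpleGraph (Fin j × ZMod i)}

lemma case_B (hi : 3 ≤ i) (hieven : i % 2 = 0) (hj : 0 < j) (hG : twistedGrid i j k ≤ G) :
    ∃ (v : Fin j × ZMod i) (c : G.Walk v v), c.IsHamiltonianCycle := by
  haveI : NeZero i := ⟨by omega⟩
  set f : ℕ → Fin j × ZMod i :=
    fun n => vtx i j hj (snakeF j 0 n).1 (snakeF j 0 n).2 with hf
  refine ham_of_fn (i * j) (by nlinarith) (by simp [ZMod.card, Nat.mul_comm]) f ?_ ?_ ?_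
  · -- injectivity
    intro m hm n hn hmn
    have h1 : (snakeF j 0 m).2 < i := by
      have : m / j < i := Nat.div_lt_iff_lt_mul hj |>.2 (by omega)
      simpa [snakeF] using this
    have h2 : (snakeF j 0 n).2 < i := by
      have : n / j < i := Nat.div_lt_iff_lt_mul hj |>.2 (by omega)
      simpa [snakeF] using this
    have := vtx_inj hi hj (snake_fst_lt hj 0 m) (snake_fst_lt hj 0 n) h1 h2 hmn
    exact snake_inj hj 0 (Prod.ext this.1 this.2)
  · -- adjacency
    intro n _
    exact step_adj_col hi hj hG le_rfl (snake_fst_lt hj 0 n) (snake_fst_lt hj 0 (n + 1))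
      (snake_gstep hj 0 n)
  · -- closure
    have hlast : i * j - 1 = j * (i - 1) + (j - 1) := by
      have h1 : j * (i - 1) + j * 1 = j * i := by
        rw [← Nat.mul_add]
        congr 1
        omega
      have h2 : i * j = j * i := Nat.mul_comm i j
      omega
    have h1 : snakeF j 0 (i * j - 1) = (0, i - 1) := by
      rw [hlast, snake_eval hj 0 (i - 1) (j - 1) (by omega)]
      rw [if_neg (by omega)]
      rw [show j - 1 - (j - 1) = 0 from by omega]
    have h0 : snakeF j 0 0 = (0, 0) := by
      have := snake_eval hj 0 0 0 hj
      simpa using this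
    rw [hf]
    dsimp only
    rw [h1, h0]
    dsimp only
    have := adj_row' (G := G) hi hj hG 0 (i - 1)
    rwa [vtx_wrap hi hj 0] at this

lemma case_C (hi : 3 ≤ i) (hiodd : i % 2 = 1) (hj : 0 < j) (hjodd : j % 2 = 1)
    (hG : twistedGrid i j k ≤ G) :
    ∃ (v : Fin j × ZMod i) (c : G.Walk v v), c.IsHamiltonianCycle := by
  haveI : NeZero i := ⟨by omega⟩
  have h2j : (0:ℕ) < 2 := by omega
  have hij : 3 * j ≤ i * j := Nat.mul_le_mul_right j hi
  have hsub : (i - 2) * j = i * j - 2 * j := tsub_mul i 2 j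
  set f : ℕ → Fin j × ZMod i := fun n =>
    if n < 2 * j then vtx i j hj (snakeF 2 0 n).2 (snakeF 2 0 n).1
    else vtx i j hj (snakeF j 1 (n - 2 * j)).1 (2 + (snakeF j 1 (n - 2 * j)).2) with hf
  have hzrow : ∀ n, n < 2 * j → (snakeF 2 0 n).2 < j := by
    intro n hn
    show n / 2 < j
    omega
  have hzcol : ∀ n, (snakeF 2 0 n).1 < i := fun n => lt_of_lt_of_le (snake_fst_lt h2j 0 n) (by omega)
  have hsrow : ∀ m, (snakeF j 1 m).1 < j := snake_fst_lt hj 1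
  have hscol : ∀ m, m < (i - 2) * j → 2 + (snakeF j 1 m).2 < i := by
    intro m hm
    have : m / j < i - 2 := Nat.div_lt_iff_lt_mul hj |>.2 hm
    have h2 : (snakeF j 1 m).2 = m / j := rfl
    omega
  refine ham_of_fn (i * j) (by omega) (by simp [ZMod.card, Nat.mul_comm]) f ?_ ?_ ?_
  · -- injectivity
    intro m hm n hn hmn
    rw [hf] at hmn
    dsimp only at hmn
    by_cases h1 : m < 2 * j <;> by_cases h2 : n < 2 * j
    · rw [if_pos h1, if_pos h2] at hmn
      have := vtx_inj hi hj (hzrow m h1) (hzrow n h2) (hzcol m) (hzcol n) hmn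
      exact snake_inj h2j 0 (Prod.ext this.2 this.1)
    · rw [if_pos h1, if_neg h2] at hmn
      have := vtx_inj hi hj (hzrow m h1) (hsrow (n - 2*j)) (hzcol m)
        (hscol (n - 2*j) (by omega)) hmn
      have hlt := snake_fst_lt h2j 0 m
      omega
    · rw [if_neg h1, if_pos h2] at hmn
      have := vtx_inj hi hj (hsrow (m - 2*j)) (hzrow n h2)
        (hscol (m - 2*j) (by omega)) (hzcol n) hmn
      have hlt := snake_fst_lt h2j 0 n
      omega
    · rw [if_neg h1, if_neg h2] at hmn
      have := vtx_inj hi hj (hsrow (m - 2*j)) (hsrow (n - 2*j))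
        (hscol (m - 2*j) (by omega)) (hscol (n - 2*j) (by omega)) hmn
      have := snake_inj hj 1 (Prod.ext this.1 (by omega : (snakeF j 1 (m - 2*j)).2 = (snakeF j 1 (n - 2*j)).2))
      omega
  · -- adjacency
    intro n hn
    rw [hf]
    dsimp only
    by_cases h1 : n + 1 < 2 * j
    · rw [if_pos (by omega), if_pos h1]
      exact step_adj_swap hi hj hG (hzrow n (by omega)) (hzrow (n+1) h1) (snake_gstep h2j 0 n)
    · by_cases h2 : n < 2 * j
      · -- n = 2j - 1
        have hn' : n = 2 * (j - 1) + 1 := by omega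
        rw [if_pos h2, if_neg h1]
        have he1 : snakeF 2 0 n = (1, j - 1) := by
          rw [hn', snake_eval h2j 0 (j - 1) 1 (by omega), if_pos (by omega)]
        have he2 : snakeF j 1 (n + 1 - 2 * j) = (j - 1, 0) := by
          have : n + 1 - 2 * j = j * 0 + 0 := by omega
          rw [this, snake_eval hj 1 0 0 hj, if_neg (by omega)]
          simp
        rw [he1, he2]
        dsimp only
        have := adj_row' (G := G) hi hj hG (j - 1) 1
        rwa [show (2:ℕ) + 0 = 1 + 1 from rfl]
      · -- both in snake part
        rw [if_neg h2, if_neg h1]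
        have hm1 : n + 1 - 2 * j = (n - 2 * j) + 1 := by omega
        rw [hm1]
        have hstep := gstep_shift 2 (snake_gstep hj 1 (n - 2 * j))
        refine step_adj_col hi hj hG le_rfl ?_ ?_ hstep
        · exact hsrow (n - 2*j)
        · exact hsrow (n - 2*j + 1)
  · -- closure
    rw [hf]
    dsimp only
    rw [if_neg (by omega), if_pos (by omega)]
    have he0 : snakeF 2 0 0 = (0, 0) := by
      have := snake_eval h2j 0 0 0 h2j
      simpa using this
    have he1 : snakeF j 1 (i * j - 1 - 2 * j) = (0, i - 3) := by
      have h3j : j * (i - 3) + (j - 1) = i * j - 1 - 2 * j := by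
        have : j * (i - 3) = i * j - 3 * j := by rw [Nat.mul_comm j, tsub_mul]
        omega
      rw [← h3j, snake_eval hj 1 (i - 3) (j - 1) (by omega), if_neg (by omega)]
      rw [show j - 1 - (j - 1) = 0 from by omega]
    rw [he0, he1]
    dsimp only
    have := adj_row' (G := G) hi hj hG 0 (i - 1)
    rw [vtx_wrap hi hj 0] at this
    rwa [show (2:ℕ) + (i - 3) = i - 1 from by omega]

lemma case_D (hi : 3 ≤ i) (hiodd : i % 2 = 1) (hj2 : 2 ≤ j) (hjeven : j % 2 = 0)
    (hG : twistedGrid i j k ≤ G) :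
    ∃ (v : Fin j × ZMod i) (c : G.Walk v v), c.IsHamiltonianCycle := by
  haveI : NeZero i := ⟨by omega⟩
  have hj : 0 < j := by omega
  have hJ : 0 < j - 1 := by omega
  have h2j : (0:ℕ) < 2 := by omega
  have key : (i - 2) * (j - 1) + (2 * (j - 1) + i) = i * j := by
    obtain ⟨a, rfl⟩ : ∃ a, i = a + 3 := ⟨i - 3, by omega⟩
    obtain ⟨b, rfl⟩ : ∃ b, j = b + 2 := ⟨j - 2, by omega⟩
    have h1 : a + 3 - 2 = a + 1 := by omega
    have h2 : b + 2 - 1 = b + 1 := by omega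
    rw [h1, h2]
    ring
  have key2 : (j - 1) * (i - 3) + (j - 1) = (i - 2) * (j - 1) := by
    have h1 : (j - 1) * (i - 3) + (j - 1) * 1 = (j - 1) * (i - 3 + 1) := by rw [Nat.mul_add]
    have h2 : i - 3 + 1 = i - 2 := by omega
    rw [h2] at h1
    rw [Nat.mul_comm (j-1) (i-2)] at h1
    omega
  set N1 := 2 * (j - 1) with hN1
  set N2 := 2 * (j - 1) + i with hN2
  have hmid : ∀ m : ℕ, m < i → ((1 : ZMod i) - ((m : ℕ) : ZMod i)) = ((1 : ZMod i) - (m : ZMod i)) := fun _ _ => rfl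
  set f : ℕ → Fin j × ZMod i := fun n =>
    if n < N1 then vtx i j hj (snakeF 2 0 n).2 (snakeF 2 0 n).1
    else if n < N2 then (⟨j - 1, by omega⟩, (1 : ZMod i) - ((n - N1 : ℕ) : ZMod i))
    else vtx i j hj (snakeF (j-1) 1 (n - N2)).1 (2 + (snakeF (j-1) 1 (n - N2)).2) with hf
  have hzrow : ∀ n, n < N1 → (snakeF 2 0 n).2 < j - 1 := by
    intro n hn
    show n / 2 < j - 1
    omega
  have hzcol : ∀ n, (snakeF 2 0 n).1 < i :=
    fun n => lt_of_lt_of_le (snake_fst_lt h2j 0 n) (by omega)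
  have hsrow : ∀ m, (snakeF (j-1) 1 m).1 < j - 1 := snake_fst_lt hJ 1
  have hscol : ∀ m, m < (i - 2) * (j - 1) → 2 + (snakeF (j-1) 1 m).2 < i := by
    intro m hm
    have : m / (j-1) < i - 2 := Nat.div_lt_iff_lt_mul hJ |>.2 hm
    have h2 : (snakeF (j-1) 1 m).2 = m / (j-1) := rfl
    omega
  -- row component of vtx for r < j
  have hrowval : ∀ (r c : ℕ), r < j → ((vtx i j hj r c).1 : ℕ) = r := by
    intro r c hr
    show r % j = r
    exact Nat.mod_eq_of_lt hr
  refine ham_of_fn (i * j) (by nlinarith) (by simp [ZMod.card, Nat.mul_comm]) f ?_ ?_ ?_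
  · -- injectivity
    intro m hm n hn hmn
    rw [hf] at hmn
    dsimp only at hmn
    by_cases h1 : m < N1 <;> by_cases h2 : n < N1
    · rw [if_pos h1, if_pos h2] at hmn
      have := vtx_inj hi hj (by have := hzrow m h1; omega) (by have := hzrow n h2; omega)
        (hzcol m) (hzcol n) hmn
      exact snake_inj h2j 0 (Prod.ext this.2 this.1)
    · rw [if_pos h1, if_neg h2] at hmn
      by_cases h3 : n < N2
      · rw [if_pos h3] at hmn
        have := congrArg (fun p : Fin j × ZMod i => (p.1 : ℕ)) hmn
        dsimp only at this
        rw [hrowval _ _ (by have := hzrow m h1; omega)] at this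
        have := hzrow m h1
        omega
      · rw [if_neg h3] at hmn
        have := vtx_inj hi hj (by have := hzrow m h1; omega) (by have := hsrow (n - N2); omega)
          (hzcol m) (hscol (n - N2) (by omega)) hmn
        have hlt := snake_fst_lt h2j 0 m
        omega
    · rw [if_neg h1, if_pos h2] at hmn
      by_cases h3 : m < N2
      · rw [if_pos h3] at hmn
        have := congrArg (fun p : Fin j × ZMod i => (p.1 : ℕ)) hmn
        dsimp only at this
        rw [hrowval _ _ (by have := hzrow n h2; omega)] at this
        have := hzrow n h2
        omega
      · rw [if_neg h3] at hmn
        have := vtx_inj hi hj (by have := hsrow (m - N2); omega) (by have := hzrow n h2; omega)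
          (hscol (m - N2) (by omega)) (hzcol n) hmn
        have hlt := snake_fst_lt h2j 0 n
        omega
    · rw [if_neg h1, if_neg h2] at hmn
      by_cases h3 : m < N2 <;> by_cases h4 : n < N2
      · rw [if_pos h3, if_pos h4] at hmn
        have := congrArg (fun p : Fin j × ZMod i => p.2) hmn
        dsimp only at this
        have h5 : ((m - N1 : ℕ) : ZMod i) = ((n - N1 : ℕ) : ZMod i) := by
          have := sub_right_injective this
          exact this
        have := congrArg ZMod.val h5
        rw [ZMod.val_cast_of_lt (by omega), ZMod.val_cast_of_lt (by omega)] at this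
        omega
      · rw [if_pos h3, if_neg h4] at hmn
        have := congrArg (fun p : Fin j × ZMod i => (p.1 : ℕ)) hmn
        dsimp only at this
        rw [hrowval _ _ (by have := hsrow (n - N2); omega)] at this
        have := hsrow (n - N2)
        omega
      · rw [if_neg h3, if_pos h4] at hmn
        have := congrArg (fun p : Fin j × ZMod i => (p.1 : ℕ)) hmn
        dsimp only at this
        rw [hrowval _ _ (by have := hsrow (m - N2); omega)] at this
        have := hsrow (m - N2)
        omega
      · rw [if_neg h3, if_neg h4] at hmn
        have := vtx_inj hi hj (by have := hsrow (m - N2); omega) (by have := hsrow (n - N2); omega)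
          (hscol (m - N2) (by omega)) (hscol (n - N2) (by omega)) hmn
        have := snake_inj hJ 1 (Prod.ext this.1
          (by omega : (snakeF (j-1) 1 (m - N2)).2 = (snakeF (j-1) 1 (n - N2)).2))
        omega
  · -- adjacency
    intro n hn
    rw [hf]
    dsimp only
    by_cases h1 : n + 1 < N1
    · rw [if_pos (by omega), if_pos h1]
      exact step_adj_swap hi hj hG (by have := hzrow n (by omega); omega)
        (by have := hzrow (n+1) h1; omega) (snake_gstep h2j 0 n)
    · by_cases h2 : n < N1
      · -- n = N1 - 1 : zigzag end -> middle start
        have hn' : n = 2 * (j - 2) + 1 := by omega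
        rw [if_pos h2, if_neg (show ¬ n + 1 < N1 from by omega),
          if_pos (show n + 1 < N2 from by omega)]
        have he1 : snakeF 2 0 n = (1, j - 2) := by
          rw [hn', snake_eval h2j 0 (j - 2) 1 (by omega), if_pos (by omega)]
        rw [he1]
        dsimp only
        have he2 : ((n + 1 - N1 : ℕ) : ZMod i) = 0 := by
          rw [show n + 1 - N1 = 0 from by omega]
          simp
        rw [he2, sub_zero]
        have := adj_vert (G := G) hG (b := ⟨(j-2) % j, Nat.mod_lt _ hj⟩)
          (b' := ⟨j - 1, by omega⟩) (by simp [Nat.mod_eq_of_lt (show j - 2 < j from by omega)]; omega)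
          (1 : ZMod i)
        have hv : vtx i j hj (j-2) 1 = (⟨(j-2) % j, Nat.mod_lt _ hj⟩, (1 : ZMod i)) := by
          unfold vtx
          rw [Prod.mk.injEq]
          exact ⟨rfl, by push_cast; ring⟩
        rw [hv]
        exact this
      · by_cases h3 : n + 1 < N2
        · -- both middle
          rw [if_neg h2, if_neg (show ¬ n + 1 < N1 from by omega),
            if_pos (show n < N2 from by omega), if_pos h3]
          have hm1 : n + 1 - N1 = (n - N1) + 1 := by omega
          rw [hm1]
          have ha : (1 : ZMod i) - (((n - N1) + 1 : ℕ) : ZMod i) + 1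
              = (1 : ZMod i) - ((n - N1 : ℕ) : ZMod i) := by
            push_cast
            ring
          have := adj_row (G := G) hi hG ⟨j - 1, by omega⟩
            ((1 : ZMod i) - (((n - N1) + 1 : ℕ) : ZMod i))
          rw [ha] at this
          exact this.symm
        · by_cases h4 : n < N2
          · -- n = N2 - 1 : middle end -> snake start
            rw [if_neg h2, if_neg (show ¬ n + 1 < N1 from by omega), if_pos h4, if_neg h3]
            have hn' : n - N1 = i - 1 := by omega
            rw [hn']
            have he2 : snakeF (j-1) 1 (n + 1 - N2) = (j - 2, 0) := by
              rw [show n + 1 - N2 = (j-1) * 0 + 0 from by omega,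
                snake_eval hJ 1 0 0 hJ, if_neg (by omega)]
              rw [Prod.mk.injEq]
              omega
            rw [he2]
            dsimp only
            have hval : (1 : ZMod i) - ((i - 1 : ℕ) : ZMod i) = ((2 + 0 : ℕ) : ZMod i) := by
              have : ((i - 1 : ℕ) : ZMod i) = (i : ZMod i) - 1 := by
                push_cast [Nat.cast_sub (show 1 ≤ i from by omega)]
                ring
              rw [this, ZMod.natCast_self]
              push_cast
              ring
            rw [hval]
            have hv : vtx i j hj (j-2) (2 + 0) = (⟨(j-2) % j, Nat.mod_lt _ hj⟩, ((2 + 0 : ℕ) : ZMod i)) := rfl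
            rw [hv]
            refine (adj_vert (G := G) hG (b := ⟨(j-2) % j, Nat.mod_lt _ hj⟩)
              (b' := ⟨j - 1, by omega⟩) ?_ _).symm
            simp [Nat.mod_eq_of_lt (show j - 2 < j from by omega)]
            omega
          · -- both snake
            rw [if_neg h2, if_neg (show ¬ n + 1 < N1 from by omega), if_neg h4, if_neg h3]
            have hm1 : n + 1 - N2 = (n - N2) + 1 := by omega
            rw [hm1]
            have hstep := gstep_shift 2 (snake_gstep hJ 1 (n - N2))
            refine step_adj_col hi hj hG (show j - 1 ≤ j from by omega) ?_ ?_ hstep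
            · exact hsrow (n - N2)
            · exact hsrow (n - N2 + 1)
  · -- closure
    rw [hf]
    dsimp only
    have hN2le : N2 ≤ i * j - 1 := by omega
    rw [if_neg (show ¬ i * j - 1 < N1 from by omega),
      if_neg (show ¬ i * j - 1 < N2 from by omega), if_pos (show (0:ℕ) < N1 from by omega)]
    have he0 : snakeF 2 0 0 = (0, 0) := by
      have := snake_eval h2j 0 0 0 h2j
      simpa using this
    have he1 : snakeF (j-1) 1 (i * j - 1 - N2) = (0, i - 3) := by
      rw [show i * j - 1 - N2 = (j-1) * (i - 3) + (j - 2) from by omega,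
        snake_eval hJ 1 (i - 3) (j - 2) (by omega), if_neg (by omega)]
      rw [show j - 1 - 1 - (j - 2) = 0 from by omega]
    rw [he0, he1]
    dsimp only
    have := adj_row' (G := G) hi hj hG 0 (i - 1)
    rw [vtx_wrap hi hj 0] at this
    rwa [show (2:ℕ) + (i - 3) = i - 1 from by omega]

end Cases


/-- Every simple graph on `Fin j × ZMod i` containing all edges of the twisted toroidal grid
`T(i,j,k)` (with `i ≥ 3`, `j ≥ 1`, `0 ≤ k ≤ i-1`) has a Hamiltonian cycle. -/
theorem supergraph_of_twistedGrid_hamiltonian (i j k : ℕ) (hi : 3 ≤ i) (hj : 1 ≤ j)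
    (hk : k ≤ i - 1) (G : SimpleGraph (Fin j × ZMod i)) (hG : twistedGrid i j k ≤ G) :
    ∃ (v : Fin j × ZMod i) (c : G.Walk v v), c.IsHamiltonianCycle := by
  by_cases he : i % 2 = 0
  · exact case_B hi he (by omega) hG
  · by_cases hjo : j % 2 = 1
    · exact case_C hi (by omega) (by omega) hjo hG
    · exact case_D hi (by omega) (by omega) (by omega) hG
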